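/- arXiv:2009.14329 — 3 statements merged into one kernel-verified Lean document; each statement's English description precedes it below -/
import Mathlib

section
/- Let ω be a weight function on (0,1) with all moments ∫_0^1 t^n ω(t) dt finite, and B a weight function on (1,∞) with W_B = ∫_0^1 B(1/t²)/(t(1−t)²) dt < ∞. Then for all nonnegative integers j, k, s, m, n, r, the inner product in L^{2,B}(D̄^c) satisfies ⟨C_s^ω(e^s_{j,k}), C_s^ω(e^r_{m,n})⟩_B = π · ε_{k−j} · γ^ω_{k,s} · γ^ω_{n,r} · δ_{k−j, n−m} · ∫_0^1 u^{k−j−1} B(1/u) du, where ε_p = 1 if p ≥ 0 and ε_p = 0 if p < 0, and δ is the Kronecker delta. -/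
open MeasureTheory Complex

/-- The open unit disc in `ℂ`. -/
def unitDisc : Set ℂ := {z : ℂ | ‖z‖ < 1}

/-- The exterior of the closed unit disc in `ℂ`. -/
def outerDisc : Set ℂ := {z : ℂ | 1 < ‖z‖}

/-- The solid weighted Cauchy transform `C_s^ω f (z) = (1/π) ∫_D f(ξ) ω(|ξ|²)/(z-ξ) dA(ξ)`. -/
noncomputable def solidCauchy (ω : ℝ → ℝ) (f : ℂ → ℂ) (z : ℂ) : ℂ :=
  (Real.pi : ℂ)⁻¹ * ∫ ξ in unitDisc, f ξ * (ω (‖ξ‖ ^ 2) : ℂ) / (z - ξ)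

/-- The generic functions `e^ℓ_{j,k}(ξ) = ξ^j ξ̄^k (1 - |ξ|²)^ℓ`. -/
noncomputable def eFun (j k l : ℕ) (ξ : ℂ) : ℂ :=
  ξ ^ j * (starRingEnd ℂ) ξ ^ k * (((1 - ‖ξ‖ ^ 2) ^ l : ℝ) : ℂ)

/-- The moments `γ^ω_{k,s} = ∫_0^1 t^k (1-t)^s ω(t) dt`. -/
noncomputable def moment (ω : ℝ → ℝ) (k s : ℕ) : ℝ :=
  ∫ t in Set.Ioo (0 : ℝ) 1, t ^ k * (1 - t) ^ s * ω t

/-- The inner product of `L^{2,B}(D̄^c)`: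
`⟨f,g⟩_B = ∫_{|z|>1} f(z) conj(g(z)) B(|z|²) dA(z)`. -/
noncomputable def innerB (B : ℝ → ℝ) (f g : ℂ → ℂ) : ℂ :=
  ∫ z in outerDisc, f z * (starRingEnd ℂ) (g z) * (B (‖z‖ ^ 2) : ℂ)


open scoped Real

lemma angular (a : ℤ) :
    ∫ θ in Set.Ioo (-π) π, Complex.exp (a * θ * Complex.I) =
      if a = 0 then (2 * π : ℂ) else 0 := by
  rcases eq_or_ne a 0 with ha | ha
  · simp only [ha, Int.cast_zero, zero_mul, Complex.exp_zero, if_pos rfl]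
    rw [setIntegral_const]
    simp [Real.volume_Ioo, two_mul, ENNReal.toReal_ofReal (by positivity : (0:ℝ) ≤ π + π)]
    rw [max_eq_left (by positivity : (0:ℝ) ≤ π + π), Complex.ofReal_add]
  · have hle : (-π : ℝ) ≤ π := by linarith [Real.pi_pos]
    have h1 : ∫ θ in Set.Ioo (-π) π, Complex.exp (a * θ * Complex.I)
        = ∫ θ in (-π)..π, Complex.exp ((a * Complex.I) * θ) := by
      rw [intervalIntegral.integral_of_le hle, integral_Ioc_eq_integral_Ioo]
      congr 1; ext θ; ring_nf
    have hc : (a : ℂ) * Complex.I ≠ 0 :=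
      mul_ne_zero (Int.cast_ne_zero.2 ha) Complex.I_ne_zero
    rw [h1, integral_exp_mul_complex hc, if_neg ha]
    have : Complex.exp ((a : ℂ) * Complex.I * π) = Complex.exp ((a : ℂ) * Complex.I * (-π)) := by
      rw [show ((a:ℂ) * Complex.I * π) = (a:ℂ) * Complex.I * (-π) + a * (2 * π * Complex.I) by ring,
        Complex.exp_add, Complex.exp_int_mul_two_pi_mul_I, mul_one]
    rw [this]
    simp

lemma polar_pt (a b : ℤ) (g : ℝ → ℂ) (r θ : ℝ) (hr : 0 < r) :
    r • ((Complex.polarCoord.symm (r, θ)) ^ a *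
        (starRingEnd ℂ) (Complex.polarCoord.symm (r, θ)) ^ b *
        g (‖Complex.polarCoord.symm (r, θ)‖ ^ 2))
      = ((r : ℂ) ^ (a + b) * r * g (r ^ 2)) *
        Complex.exp (((a : ℂ) - b) * θ * Complex.I) := by
  have hz : Complex.polarCoord.symm (r, θ) = (r : ℂ) * Complex.exp (θ * Complex.I) := by
    rw [Complex.polarCoord_symm_apply, Complex.exp_mul_I, Complex.ofReal_cos,
      Complex.ofReal_sin]
  have habs : ‖Complex.polarCoord.symm (r, θ)‖ = r := by
    rw [Complex.norm_polarCoord_symm]; exact abs_of_pos hr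
  have hrne : (r : ℂ) ≠ 0 := Complex.ofReal_ne_zero.2 hr.ne'
  have hconj : (starRingEnd ℂ) (Complex.polarCoord.symm (r, θ))
      = (r : ℂ) * (Complex.exp (θ * Complex.I))⁻¹ := by
    rw [hz, map_mul, Complex.conj_ofReal, ← Complex.exp_conj, ← Complex.exp_neg]
    congr 2
    simp [Complex.ext_iff]
  rw [habs, hconj, hz, mul_zpow, mul_zpow, ← Complex.exp_int_mul]
  rw [inv_zpow, ← zpow_neg, ← Complex.exp_int_mul]
  rw [Complex.real_smul]
  rw [show ((a:ℂ) - b) * θ * Complex.I = (a:ℂ) * (θ * Complex.I) + (-b : ℤ) * (θ * Complex.I) by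
    push_cast; ring, Complex.exp_add, zpow_add₀ hrne]
  ring

lemma polar_set_integral (a b : ℤ) (g : ℝ → ℂ) (S : Set ℝ) (hSm : MeasurableSet S)
    (hS : S ⊆ Set.Ioi (0 : ℝ)) :
    ∫ z in {z : ℂ | ‖z‖ ∈ S},
        z ^ a * (starRingEnd ℂ) z ^ b * g (‖z‖ ^ 2)
      = (∫ r in S, (r : ℂ) ^ (a + b) * r * g (r ^ 2)) *
        ∫ θ in Set.Ioo (-π) π, Complex.exp (((a : ℂ) - b) * θ * Complex.I) := by
  set F : ℂ → ℂ := fun z => z ^ a * (starRingEnd ℂ) z ^ b * g (‖z‖ ^ 2) with hF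
  set T : Set ℂ := {z : ℂ | ‖z‖ ∈ S} with hT
  have hTm : MeasurableSet T := continuous_norm.measurable hSm
  set G : ℝ × ℝ → ℂ := fun p =>
    ((p.1 : ℂ) ^ (a + b) * p.1 * g (p.1 ^ 2)) * Complex.exp (((a : ℂ) - b) * p.2 * Complex.I)
    with hG
  have hsub : S ×ˢ Set.Ioo (-π) π ⊆ polarCoord.target := fun p hp =>
    ⟨hS hp.1, hp.2⟩
  calc ∫ z in T, F z = ∫ z, T.indicator F z := (integral_indicator hTm).symm
    _ = ∫ p in polarCoord.target, p.1 • T.indicator F (Complex.polarCoord.symm p) :=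
        (Complex.integral_comp_polarCoord_symm (T.indicator F)).symm
    _ = ∫ p in polarCoord.target, (S ×ˢ Set.Ioo (-π) π).indicator G p := by
        apply setIntegral_congr_fun polarCoord.open_target.measurableSet
        intro p hp
        show p.1 • T.indicator F (Complex.polarCoord.symm p) = _
        have hp1 : 0 < p.1 := hp.1
        by_cases hpS : p.1 ∈ S
        · have hzT : Complex.polarCoord.symm p ∈ T := by
            simp only [hT, Set.mem_setOf_eq, Complex.norm_polarCoord_symm, abs_of_pos hp1]
            exact hpS
          rw [Set.indicator_of_mem hzT, Set.indicator_of_mem (Set.mk_mem_prod hpS hp.2)]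
          simpa [hF, hG] using polar_pt a b g p.1 p.2 hp1
        · have hzT : Complex.polarCoord.symm p ∉ T := by
            simp only [hT, Set.mem_setOf_eq, Complex.norm_polarCoord_symm, abs_of_pos hp1]
            exact hpS
          rw [Set.indicator_of_notMem hzT, Set.indicator_of_notMem
            (fun hmem => hpS hmem.1), smul_zero]
    _ = ∫ p in polarCoord.target ∩ S ×ˢ Set.Ioo (-π) π, G p :=
        setIntegral_indicator (hSm.prod measurableSet_Ioo)
    _ = ∫ p in S ×ˢ Set.Ioo (-π) π, G p := by
        rw [Set.inter_eq_self_of_subset_right hsub]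
    _ = (∫ r in S, (r : ℂ) ^ (a + b) * r * g (r ^ 2)) *
        ∫ θ in Set.Ioo (-π) π, Complex.exp (((a : ℂ) - b) * θ * Complex.I) := by
        rw [MeasureTheory.Measure.volume_eq_prod]
        exact setIntegral_prod_mul (fun r : ℝ => (r : ℂ) ^ (a + b) * r * g (r ^ 2))
          (fun θ : ℝ => Complex.exp (((a : ℂ) - b) * θ * Complex.I)) S (Set.Ioo (-π) π)

lemma sq_maps : ∀ᵉ (x ∈ Set.Ioo (0:ℝ) 1), True := fun _ _ => trivial

lemma sq_image_Ioo : (fun r : ℝ => r ^ 2) '' Set.Ioo 0 1 = Set.Ioo (0:ℝ) 1 := by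
  ext t
  constructor
  · rintro ⟨r, ⟨hr0, hr1⟩, rfl⟩
    exact ⟨by positivity, by simp only []; nlinarith [mul_lt_mul'' hr1 hr1 (le_of_lt hr0) (le_of_lt hr0)]⟩
  · rintro ⟨ht0, ht1⟩
    exact ⟨Real.sqrt t, ⟨Real.sqrt_pos.2 ht0,
      (by rw [show (1:ℝ) = Real.sqrt 1 by simp]; exact Real.sqrt_lt_sqrt (le_of_lt ht0) ht1)⟩,
      Real.sq_sqrt (le_of_lt ht0)⟩

lemma sq_injOn : Set.InjOn (fun r : ℝ => r ^ 2) (Set.Ioo 0 1) := by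
  intro x hx y hy h
  simp only at h
  have h2 : (x - y) * (x + y) = 0 := by ring_nf; nlinarith
  rcases mul_eq_zero.1 h2 with h3 | h3
  · linarith
  · exfalso; have := hx.1; have := hy.1; linarith

lemma sq_deriv : ∀ x ∈ Set.Ioo (0:ℝ) 1,
    HasDerivWithinAt (fun r : ℝ => r ^ 2) (2 * x) (Set.Ioo 0 1) x := by
  intro x _
  simpa using (hasDerivAt_pow 2 x).hasDerivWithinAt

lemma subst_sq (g : ℝ → ℝ) :
    ∫ t in Set.Ioo (0:ℝ) 1, g t = ∫ r in Set.Ioo (0:ℝ) 1, 2 * r * g (r ^ 2) := by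
  conv_lhs => rw [← sq_image_Ioo]
  rw [integral_image_eq_integral_abs_deriv_smul measurableSet_Ioo sq_deriv sq_injOn g]
  apply setIntegral_congr_fun measurableSet_Ioo
  intro x hx
  simp only [smul_eq_mul]
  rw [abs_of_pos (by linarith [hx.1] : (0:ℝ) < 2 * x)]

lemma subst_sq_integrable (g : ℝ → ℝ) (hg : IntegrableOn g (Set.Ioo (0:ℝ) 1)) :
    IntegrableOn (fun r : ℝ => 2 * r * g (r ^ 2)) (Set.Ioo (0:ℝ) 1) := by
  have := (integrableOn_image_iff_integrableOn_abs_deriv_smul measurableSet_Ioo sq_deriv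
    sq_injOn g).1 (by rwa [sq_image_Ioo])
  apply this.congr_fun ?_ measurableSet_Ioo
  intro x hx
  simp only [smul_eq_mul]
  rw [abs_of_pos (by linarith [hx.1] : (0:ℝ) < 2 * x)]

lemma inv_sq_image : (fun r : ℝ => (r ^ 2)⁻¹) '' Set.Ioi 1 = Set.Ioo (0:ℝ) 1 := by
  ext u
  constructor
  · rintro ⟨r, hr, rfl⟩
    have hr1 : (1:ℝ) < r := hr
    constructor
    · positivity
    · rw [inv_lt_one_iff₀]; right; nlinarith
  · rintro ⟨hu0, hu1⟩
    refine ⟨(Real.sqrt u)⁻¹, ?_, ?_⟩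
    · have h1 : Real.sqrt u < 1 := by
        rw [show (1:ℝ) = Real.sqrt 1 by simp]; exact Real.sqrt_lt_sqrt (le_of_lt hu0) hu1
      have h2 : 0 < Real.sqrt u := Real.sqrt_pos.2 hu0
      exact (one_lt_inv₀ h2).2 h1
    · have h2 : 0 < Real.sqrt u := Real.sqrt_pos.2 hu0
      simp only [inv_pow, inv_inv]
      rw [Real.sq_sqrt (le_of_lt hu0)]

lemma inv_sq_injOn : Set.InjOn (fun r : ℝ => (r ^ 2)⁻¹) (Set.Ioi 1) := by
  intro x hx y hy h
  have hx1 : (1:ℝ) < x := hx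
  have hy1 : (1:ℝ) < y := hy
  simp only [inv_inj] at h
  have h2 : (x - y) * (x + y) = 0 := by ring_nf; nlinarith
  rcases mul_eq_zero.1 h2 with h3 | h3
  · linarith
  · exfalso; linarith

lemma inv_sq_deriv : ∀ x ∈ Set.Ioi (1:ℝ),
    HasDerivWithinAt (fun r : ℝ => (r ^ 2)⁻¹) (-2 / x ^ 3) (Set.Ioi 1) x := by
  intro x hx
  have hx0 : x ≠ 0 := by have : (1:ℝ) < x := hx; linarith
  have := (hasDerivAt_zpow (-2) x (Or.inl hx0))
  have h2 : ∀ r : ℝ, r ≠ 0 → (r : ℝ) ^ (-2 : ℤ) = (r ^ 2)⁻¹ := by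
    intro r hr; rw [zpow_neg, zpow_two]; norm_num [sq]
  apply HasDerivAt.hasDerivWithinAt
  have h3 : HasDerivAt (fun r : ℝ => (r : ℝ) ^ (-2:ℤ)) ((-2 : ℤ) * x ^ (-3 : ℤ)) x := by
    simpa using this
  have h4 : HasDerivAt (fun r : ℝ => (r ^ 2)⁻¹) ((-2 : ℤ) * x ^ (-3 : ℤ)) x := by
    apply h3.congr_of_eventuallyEq
    filter_upwards [eventually_ne_nhds hx0] with r hr
    exact (h2 r hr).symm
  have e : (-2 / x ^ 3 : ℝ) = ((-2 : ℤ) : ℝ) * x ^ (-3 : ℤ) := by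
    rw [zpow_neg]
    push_cast
    field_simp
  rw [e]; exact h4
lemma subst_inv_sq (g : ℝ → ℝ) :
    ∫ u in Set.Ioo (0:ℝ) 1, g u = ∫ r in Set.Ioi (1:ℝ), 2 / r ^ 3 * g ((r ^ 2)⁻¹) := by
  conv_lhs => rw [← inv_sq_image]
  rw [integral_image_eq_integral_abs_deriv_smul measurableSet_Ioi inv_sq_deriv inv_sq_injOn g]
  apply setIntegral_congr_fun measurableSet_Ioi
  intro x hx
  have hx1 : (1:ℝ) < x := hx
  simp only [smul_eq_mul]
  rw [abs_div, abs_of_pos (by positivity : (0:ℝ) < x ^ 3), abs_neg, abs_of_pos (by norm_num : (0:ℝ) < 2)]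

lemma radial_integrable {ω : ℝ → ℝ} (hω_meas : Measurable ω)
    (hω_nonneg : ∀ t ∈ Set.Ioo (0 : ℝ) 1, 0 ≤ ω t)
    (hω_mom : ∀ n : ℕ, IntegrableOn (fun t => t ^ n * ω t) (Set.Ioo (0 : ℝ) 1))
    (c s : ℕ) (hc : 1 ≤ c) :
    IntegrableOn (fun r => r ^ c * (1 - r ^ 2) ^ s * ω (r ^ 2)) (Set.Ioo (0 : ℝ) 1) := by
  have h0 : IntegrableOn ω (Set.Ioo (0 : ℝ) 1) := by
    have := hω_mom 0; simpa using this
  have h1 : IntegrableOn (fun r : ℝ => 2 * r * ω (r ^ 2)) (Set.Ioo (0 : ℝ) 1) :=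
    subst_sq_integrable ω h0
  apply h1.mono'
  · exact (((measurable_id.pow_const c).mul
      ((measurable_const.sub (measurable_id.pow_const 2)).pow_const s)).mul
      (hω_meas.comp (measurable_id.pow_const 2))).aestronglyMeasurable
  · rw [ae_restrict_iff' measurableSet_Ioo]
    filter_upwards with r hr
    have hr0 : 0 < r := hr.1
    have hr1 : r < 1 := hr.2
    have hsq : r ^ 2 ∈ Set.Ioo (0 : ℝ) 1 := ⟨by positivity, by nlinarith⟩
    have hw : 0 ≤ ω (r ^ 2) := hω_nonneg _ hsq
    have h2 : r ^ c ≤ r := by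
      simpa using pow_le_pow_of_le_one hr0.le hr1.le hc
    have h3 : (1 - r ^ 2) ^ s ≤ 1 := pow_le_one₀ (by nlinarith) (by nlinarith)
    have h4 : (0:ℝ) ≤ (1 - r ^ 2) ^ s := pow_nonneg (by nlinarith) _
    have h5 : (0:ℝ) ≤ r ^ c := by positivity
    rw [Real.norm_eq_abs, _root_.abs_of_nonneg (mul_nonneg (mul_nonneg h5 h4) hw)]
    calc r ^ c * (1 - r ^ 2) ^ s * ω (r ^ 2)
        ≤ (r * 1) * ω (r ^ 2) :=
          mul_le_mul_of_nonneg_right (mul_le_mul h2 h3 h4 hr0.le) hw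
      _ ≤ 2 * r * ω (r ^ 2) := by nlinarith

lemma im_zero_null : (volume : Measure ℂ) {z : ℂ | z.im = 0} = 0 := by
  have h1 : {z : ℂ | z.im = 0}
      = Complex.measurableEquivRealProd ⁻¹' (Set.univ ×ˢ ({0} : Set ℝ)) := by
    ext z; simp [Complex.measurableEquivRealProd_apply, eq_comm]
  rw [h1, Complex.volume_preserving_equiv_real_prod.measure_preimage
    (MeasurableSet.univ.prod (measurableSet_singleton 0)).nullMeasurableSet]
  rw [MeasureTheory.Measure.volume_eq_prod, Measure.prod_prod, measure_singleton, mul_zero]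

lemma integrableOn_disc {ω : ℝ → ℝ} (hω_meas : Measurable ω)
    (hω_nonneg : ∀ t ∈ Set.Ioo (0 : ℝ) 1, 0 ≤ ω t)
    (hω_mom : ∀ n : ℕ, IntegrableOn (fun t => t ^ n * ω t) (Set.Ioo (0 : ℝ) 1))
    (j k s : ℕ) :
    IntegrableOn (fun ξ => eFun j k s ξ * (ω (‖ξ‖ ^ 2) : ℂ)) unitDisc := by
  set f : ℂ → ℂ := fun ξ => eFun j k s ξ * (ω (‖ξ‖ ^ 2) : ℂ) with hf
  set rect : Set (ℝ × ℝ) := Set.Ioo (0:ℝ) 1 ×ˢ Set.Ioo (-π) π with hrect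
  have hrectm : MeasurableSet rect := measurableSet_Ioo.prod measurableSet_Ioo
  set g : ℝ → ℂ := fun t => ((1 - t) ^ s * ω t : ℝ) with hg
  -- product-form integrand
  set P : ℝ × ℝ → ℂ := fun p =>
    ((p.1 ^ (j + k + 1) * (1 - p.1 ^ 2) ^ s * ω (p.1 ^ 2) : ℝ) : ℂ) *
      Complex.exp (((j : ℂ) - k) * p.2 * Complex.I) with hP
  have hang : IntegrableOn (fun θ : ℝ => Complex.exp (((j : ℂ) - k) * θ * Complex.I))
      (Set.Ioo (-π) π) := by
    have hcont : Continuous fun θ : ℝ => Complex.exp (((j : ℂ) - k) * θ * Complex.I) := by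
      fun_prop
    exact (hcont.integrableOn_Icc (a := -π) (b := π)).mono_set Set.Ioo_subset_Icc_self
  have hPint : IntegrableOn P rect := by
    rw [IntegrableOn, hrect, MeasureTheory.Measure.volume_eq_prod, ← Measure.prod_restrict]
    exact Integrable.mul_prod
      ((radial_integrable hω_meas hω_nonneg hω_mom (j + k + 1) s (by omega)).ofReal) hang
  -- transfer through real polar coordinates
  set fC : ℝ × ℝ → ℂ := f ∘ ⇑Complex.measurableEquivRealProd.symm with hfC
  set Bmat : ℝ × ℝ → ℝ × ℝ →L[ℝ] ℝ × ℝ := fun p =>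
    LinearMap.toContinuousLinearMap (Matrix.toLin (Module.Basis.finTwoProd ℝ) (Module.Basis.finTwoProd ℝ)
      !![Real.cos p.2, -p.1 * Real.sin p.2; Real.sin p.2, p.1 * Real.cos p.2]) with hBmat
  have hBdet : ∀ p : ℝ × ℝ, (Bmat p).det = p.1 := by
    intro p
    conv_rhs => rw [← one_mul p.1, ← Real.cos_sq_add_sin_sq p.2]
    simp only [hBmat, neg_mul, LinearMap.det_toContinuousLinearMap, LinearMap.det_toLin,
      Matrix.det_fin_two_of, sub_neg_eq_add]
    ring
  have hderiv : ∀ p ∈ rect, HasFDerivWithinAt polarCoord.symm (Bmat p) rect p :=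
    fun p _ => (hasFDerivAt_polarCoord_symm p).hasFDerivWithinAt
  have hsubt : rect ⊆ polarCoord.target := fun p hp =>
    ⟨Set.Ioo_subset_Ioi_self hp.1, hp.2⟩
  have hinj : Set.InjOn (⇑polarCoord.symm) rect := by
    have := polarCoord.symm.injOn
    rw [OpenPartialHomeomorph.symm_source] at this
    exact this.mono hsubt
  have hkey := (integrableOn_image_iff_integrableOn_abs_det_fderiv_smul volume hrectm
    hderiv hinj fC)
  have hEq : ∀ p ∈ rect, |(Bmat p).det| • fC (polarCoord.symm p) = P p := by
    intro p hp
    have hp1 : 0 < p.1 := hp.1.1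
    have hfz : ∀ z : ℂ, f z = z ^ (j : ℤ) * (starRingEnd ℂ) z ^ (k : ℤ) *
        g (‖z‖ ^ 2) := by
      intro z
      simp only [hf, hg, eFun, zpow_natCast, Complex.ofReal_mul]
      ring
    have h1 : fC (polarCoord.symm p) = f (Complex.polarCoord.symm p) := rfl
    rw [hBdet, abs_of_pos hp1, h1, hfz]
    have := polar_pt (j : ℤ) (k : ℤ) g p.1 p.2 hp1
    rw [show ((p.1, p.2) : ℝ × ℝ) = p from rfl] at this
    rw [this]
    simp only [hP, hg]
    rw [show ((j : ℤ) : ℂ) - ((k : ℤ) : ℂ) = ((j:ℂ) - k) by push_cast; ring,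
      show (j : ℤ) + (k : ℤ) = ((j + k : ℕ) : ℤ) by push_cast; ring, zpow_natCast]
    push_cast
    ring
  have hstep2 : IntegrableOn fC (⇑polarCoord.symm '' rect) volume :=
    hkey.2 (hPint.congr_fun (fun p hp => (hEq p hp).symm) hrectm)
  -- transfer to ℂ
  have himg : Complex.measurableEquivRealProd.symm '' (⇑polarCoord.symm '' rect)
      = ⇑Complex.polarCoord.symm '' rect := by
    rw [Set.image_image]; rfl
  have hmapped : IntegrableOn f (⇑Complex.polarCoord.symm '' rect) volume := by
    rw [IntegrableOn, ← himg,
      show (volume : Measure ℂ) =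
        Measure.map (⇑Complex.measurableEquivRealProd.symm) volume from
        ((MeasurePreserving.symm _ Complex.volume_preserving_equiv_real_prod).map_eq).symm,
      MeasurableEmbedding.restrict_map
        Complex.measurableEquivRealProd.symm.measurableEmbedding,
      Set.preimage_image_eq _ Complex.measurableEquivRealProd.symm.injective,
      MeasurableEmbedding.integrable_map_iff
        Complex.measurableEquivRealProd.symm.measurableEmbedding]
    exact hstep2
  apply hmapped.mono_set_ae
  rw [ae_le_set]
  apply measure_mono_null ?_ im_zero_null
  rintro z ⟨hz1, hz2⟩
  by_contra him
  apply hz2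
  have him' : z.im ≠ 0 := him
  have hzs : z ∈ Complex.polarCoord.source := by
    rw [Complex.polarCoord_source]
    exact Complex.mem_slitPlane_iff.2 (Or.inr him')
  refine ⟨Complex.polarCoord z, ?_, Complex.polarCoord.left_inv hzs⟩
  rw [Complex.polarCoord_apply]
  refine ⟨⟨?_, hz1⟩, ⟨Complex.neg_pi_lt_arg z, ?_⟩⟩
  · exact norm_pos_iff.mpr (fun h0 => him' (by rw [h0]; rfl))
  · exact lt_of_le_of_ne (Complex.arg_le_pi z) (fun h => him' (Complex.arg_eq_pi_iff.1 h).2)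

lemma unitDisc_ae : unitDisc =ᵐ[volume] {z : ℂ | ‖z‖ ∈ Set.Ioo 0 1} := by
  rw [MeasureTheory.ae_eq_set]
  constructor
  · apply measure_mono_null ?_ (measure_singleton (0:ℂ))
    rintro z ⟨hz1, hz2⟩
    simp only [unitDisc, Set.mem_setOf_eq] at hz1
    simp only [Set.mem_setOf_eq, Set.mem_Ioo, not_and_or, not_lt] at hz2
    rcases hz2 with h | h
    · have : ‖z‖ = 0 := le_antisymm h (norm_nonneg z)
      simpa using this
    · exact absurd hz1 (not_lt.2 h)
  · convert measure_empty (μ := (volume : Measure ℂ))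
    rw [Set.diff_eq_empty]
    rintro z ⟨_, hz⟩
    exact hz

lemma disc_moment (ω : ℝ → ℝ) (j k s p : ℕ) :
    ∫ ξ in unitDisc, (eFun j k s ξ * (ω (‖ξ‖ ^ 2) : ℂ)) * ξ ^ p
      = if j + p = k then (π : ℂ) * (moment ω k s) else 0 := by
  set g : ℝ → ℂ := fun t => ((1 - t) ^ s * ω t : ℝ) with hg
  rw [setIntegral_congr_set unitDisc_ae]
  have hcong : ∀ ξ : ℂ, (eFun j k s ξ * (ω (‖ξ‖ ^ 2) : ℂ)) * ξ ^ p
      = ξ ^ ((j + p : ℕ) : ℤ) * (starRingEnd ℂ) ξ ^ ((k : ℕ) : ℤ)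
        * g (‖ξ‖ ^ 2) := by
    intro ξ
    simp only [eFun, hg, zpow_natCast, Complex.ofReal_mul, pow_add]
    ring
  simp only [hcong]
  rw [polar_set_integral ((j + p : ℕ) : ℤ) ((k : ℕ) : ℤ) g (Set.Ioo 0 1) measurableSet_Ioo
    (fun x hx => hx.1)]
  have hangle : ∫ θ in Set.Ioo (-π) π,
      Complex.exp (((((j + p : ℕ) : ℤ) : ℂ) - ((k : ℕ) : ℤ)) * θ * Complex.I)
      = if ((j + p : ℕ) : ℤ) - ((k : ℕ) : ℤ) = 0 then (2 * π : ℂ) else 0 := by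
    rw [← angular (((j + p : ℕ) : ℤ) - ((k : ℕ) : ℤ))]
    congr 1; ext θ; congr 2; push_cast; ring
  rw [hangle]
  by_cases hjk : j + p = k
  · rw [if_pos (by omega : ((j + p : ℕ) : ℤ) - ((k : ℕ) : ℤ) = 0), if_pos hjk]
    have hexp : ((j + p : ℕ) : ℤ) + ((k : ℕ) : ℤ) = ((2 * k : ℕ) : ℤ) := by omega
    rw [hexp]
    have hrad : ∀ r ∈ Set.Ioo (0:ℝ) 1, (r : ℂ) ^ ((2 * k : ℕ) : ℤ) * r * g (r ^ 2)
        = ((r ^ (2 * k + 1) * (1 - r ^ 2) ^ s * ω (r ^ 2) : ℝ) : ℂ) := by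
      intro r _
      rw [zpow_natCast, hg]
      push_cast
      ring
    rw [setIntegral_congr_fun measurableSet_Ioo hrad]
    have hior : (∫ r in Set.Ioo (0:ℝ) 1, ((r ^ (2 * k + 1) * (1 - r ^ 2) ^ s * ω (r ^ 2) : ℝ) : ℂ))
        = ((∫ r in Set.Ioo (0:ℝ) 1, r ^ (2 * k + 1) * (1 - r ^ 2) ^ s * ω (r ^ 2) : ℝ) : ℂ) :=
      integral_ofReal
    rw [hior]
    have hmom : moment ω k s = 2 * ∫ r in Set.Ioo (0:ℝ) 1,
        r ^ (2 * k + 1) * (1 - r ^ 2) ^ s * ω (r ^ 2) := by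
      rw [moment, subst_sq (fun t => t ^ k * (1 - t) ^ s * ω t)]
      rw [← integral_const_mul]
      apply setIntegral_congr_fun measurableSet_Ioo
      intro r _
      simp only []
      ring
    rw [hmom]
    push_cast
    have hpi : (π : ℂ) ≠ 0 := Complex.ofReal_ne_zero.2 Real.pi_ne_zero
    ring
  · rw [if_neg (by omega : ¬ ((j + p : ℕ) : ℤ) - ((k : ℕ) : ℤ) = 0), if_neg hjk, mul_zero]

lemma solidCauchy_value {ω : ℝ → ℝ} (hω_meas : Measurable ω)
    (hω_nonneg : ∀ t ∈ Set.Ioo (0 : ℝ) 1, 0 ≤ ω t)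
    (hω_mom : ∀ n : ℕ, IntegrableOn (fun t => t ^ n * ω t) (Set.Ioo (0 : ℝ) 1))
    (j k s : ℕ) (z : ℂ) (hz : 1 < ‖z‖) :
    solidCauchy ω (eFun j k s) z =
      if j ≤ k then (moment ω k s : ℂ) * (z ^ (k - j + 1))⁻¹ else 0 := by
  set f : ℂ → ℂ := fun ξ => eFun j k s ξ * (ω (‖ξ‖ ^ 2) : ℂ) with hf
  have hfi : IntegrableOn f unitDisc := integrableOn_disc hω_meas hω_nonneg hω_mom j k s
  have hzne : z ≠ 0 := by
    intro h; rw [h] at hz; simp only [norm_zero] at hz; linarith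
  set r : ℝ := (‖z‖)⁻¹ with hrdef
  have hr0 : 0 ≤ r := inv_nonneg.2 (norm_nonneg z)
  have hr1 : r < 1 := inv_lt_one_of_one_lt₀ hz
  set F : ℕ → ℂ → ℂ := fun p ξ => (z ^ (p + 1))⁻¹ * (f ξ * ξ ^ p) with hF
  have hDm : MeasurableSet unitDisc :=
    measurableSet_lt (continuous_norm.measurable) measurable_const
  -- integrability of each term
  have hFint : ∀ p : ℕ, Integrable (F p) (volume.restrict unitDisc) := by
    intro p
    apply Integrable.const_mul
    have h1 : Integrable (fun ξ : ℂ => ξ ^ p * f ξ) (volume.restrict unitDisc) := by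
      apply hfi.bdd_mul (c := 1) ((continuous_pow p).aestronglyMeasurable)
      filter_upwards [ae_restrict_mem hDm] with ξ hξ
      rw [norm_pow]
      exact pow_le_one₀ (norm_nonneg ξ) (le_of_lt hξ)
    exact h1.congr (by filter_upwards with ξ using mul_comm _ _)
  -- norm bounds
  have hnormbound : ∀ p : ℕ, (∫ ξ in unitDisc, ‖F p ξ‖) ≤
      r ^ (p + 1) * ∫ ξ in unitDisc, ‖f ξ‖ := by
    intro p
    rw [← integral_const_mul]
    apply integral_mono_of_nonneg
    · filter_upwards with ξ using norm_nonneg _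
    · exact hfi.norm.const_mul _
    · filter_upwards [ae_restrict_mem hDm] with ξ hξ
      have hξ1 : ‖ξ‖ ≤ 1 := le_of_lt hξ
      have : ‖F p ξ‖ = (‖z‖ ^ (p + 1))⁻¹ * (‖f ξ‖ * ‖ξ‖ ^ p) := by
        simp [hF, map_mul, map_pow, map_inv₀]
      rw [this, hrdef, inv_pow]
      have h2 : ‖ξ‖ ^ p ≤ 1 := pow_le_one₀ (norm_nonneg ξ) hξ1
      have h3 : (0:ℝ) ≤ (‖z‖ ^ (p + 1))⁻¹ := by positivity
      calc (‖z‖ ^ (p + 1))⁻¹ * (‖f ξ‖ * ‖ξ‖ ^ p)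
          ≤ (‖z‖ ^ (p + 1))⁻¹ * (‖f ξ‖ * 1) :=
            mul_le_mul_of_nonneg_left (mul_le_mul_of_nonneg_left h2 (norm_nonneg _)) h3
        _ = (‖z‖ ^ (p + 1))⁻¹ * ‖f ξ‖ := by ring
  have hsum : Summable fun p : ℕ => ∫ ξ in unitDisc, ‖F p ξ‖ := by
    set M : ℝ := ∫ ξ in unitDisc, ‖f ξ‖ with hM
    apply Summable.of_nonneg_of_le
      (fun p => integral_nonneg (fun ξ => norm_nonneg _)) (fun p => hnormbound p)
    have h1 : Summable fun p : ℕ => r ^ p := summable_geometric_of_lt_one hr0 hr1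
    have h2 := (h1.mul_left (r * M))
    apply h2.congr
    intro p
    rw [pow_succ]
    ring
  have hswap := integral_tsum_of_summable_integral_norm hFint hsum
  -- pointwise series identity
  have hseries : ∀ ξ ∈ unitDisc, eFun j k s ξ * (ω (‖ξ‖ ^ 2) : ℂ) / (z - ξ)
      = ∑' p : ℕ, F p ξ := by
    intro ξ hξ
    have hξ1 : ‖ξ‖ < 1 := hξ
    have hw : ‖ξ * z⁻¹‖ < 1 := by
      rw [norm_mul, norm_inv]
      calc ‖ξ‖ * (‖z‖)⁻¹ ≤ 1 * (‖z‖)⁻¹ :=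
            mul_le_mul_of_nonneg_right (le_of_lt hξ1) hr0
        _ = r := by rw [one_mul]
        _ < 1 := hr1
    have hgeo : ∑' p : ℕ, (ξ * z⁻¹) ^ p = (1 - ξ * z⁻¹)⁻¹ :=
      tsum_geometric_of_norm_lt_one hw
    have hFp : ∀ p : ℕ, F p ξ = (f ξ * z⁻¹) * (ξ * z⁻¹) ^ p := by
      intro p
      rw [hF]
      simp only [mul_pow, ← inv_pow, pow_succ, mul_inv]
      ring
    rw [show (∑' p : ℕ, F p ξ) = ∑' p : ℕ, (f ξ * z⁻¹) * (ξ * z⁻¹) ^ p from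
      tsum_congr hFp, tsum_mul_left, hgeo]
    have hzξ : z - ξ ≠ 0 := by
      intro h
      have : ‖z‖ = ‖ξ‖ := by
        rw [sub_eq_zero] at h; rw [h]
      linarith
    rw [hf]
    field_simp
  rw [solidCauchy, setIntegral_congr_fun hDm hseries, ← hswap]
  have hterm : ∀ p : ℕ, ∫ ξ in unitDisc, F p ξ
      = (z ^ (p + 1))⁻¹ * if j + p = k then (π : ℂ) * (moment ω k s) else 0 := by
    intro p
    rw [hF]
    rw [integral_const_mul]
    rw [← disc_moment ω j k s p]
  simp only [hterm]
  by_cases hjk : j ≤ k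
  · rw [if_pos hjk]
    rw [tsum_eq_single (k - j) ?_]
    · rw [if_pos (by omega)]
      have hpi : (π : ℂ) ≠ 0 := Complex.ofReal_ne_zero.2 Real.pi_ne_zero
      field_simp
    · intro p hp
      rw [if_neg (by omega), mul_zero]
  · rw [if_neg hjk]
    have : ∀ p : ℕ, (z ^ (p + 1))⁻¹ * (if j + p = k then (π : ℂ) * (moment ω k s) else 0) = 0 := by
      intro p
      rw [if_neg (by omega), mul_zero]
    simp only [this, tsum_zero, mul_zero]

theorem innerB_solidCauchy_eFun
    (ω : ℝ → ℝ) (hω_meas : Measurable ω)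
    (hω_nonneg : ∀ t ∈ Set.Ioo (0 : ℝ) 1, 0 ≤ ω t)
    (hω_mom : ∀ n : ℕ, IntegrableOn (fun t => t ^ n * ω t) (Set.Ioo (0 : ℝ) 1))
    (B : ℝ → ℝ) (hB_meas : Measurable B)
    (hB_nonneg : ∀ t ∈ Set.Ioi (1 : ℝ), 0 ≤ B t)
    (hW : IntegrableOn (fun t => B (1 / t ^ 2) / (t * (1 - t) ^ 2)) (Set.Ioo (0 : ℝ) 1))
    (j k s m n r : ℕ) :
    innerB B (solidCauchy ω (eFun j k s)) (solidCauchy ω (eFun m n r)) =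
      (Real.pi : ℂ) * (if j ≤ k then 1 else 0) * (moment ω k s : ℂ) * (moment ω n r : ℂ) *
        (if (k : ℤ) - (j : ℤ) = (n : ℤ) - (m : ℤ) then 1 else 0) *
        ((∫ u in Set.Ioo (0 : ℝ) 1, u ^ ((k : ℤ) - (j : ℤ) - 1) * B (1 / u) : ℝ) : ℂ) := by
  have hOm : MeasurableSet outerDisc :=
    measurableSet_lt measurable_const continuous_norm.measurable
  by_cases hjk : j ≤ k
  swap
  · -- first transform vanishes
    have hpt : ∀ z ∈ outerDisc, solidCauchy ω (eFun j k s) z *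
        (starRingEnd ℂ) (solidCauchy ω (eFun m n r) z) * ((B (‖z‖ ^ 2) : ℝ) : ℂ)
        = (0 : ℂ) := by
      intro z hz
      rw [solidCauchy_value hω_meas hω_nonneg hω_mom j k s z hz, if_neg hjk]
      ring
    have h0 : innerB B (solidCauchy ω (eFun j k s)) (solidCauchy ω (eFun m n r)) = 0 := by
      rw [innerB, setIntegral_congr_fun hOm hpt, integral_zero]
    rw [h0, if_neg hjk]
    ring
  by_cases hmn : m ≤ n
  swap
  · -- second transform vanishes
    have hpt : ∀ z ∈ outerDisc, solidCauchy ω (eFun j k s) z *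
        (starRingEnd ℂ) (solidCauchy ω (eFun m n r) z) * ((B (‖z‖ ^ 2) : ℝ) : ℂ)
        = (0 : ℂ) := by
      intro z hz
      rw [solidCauchy_value hω_meas hω_nonneg hω_mom m n r z hz, if_neg hmn, map_zero]
      ring
    have h0 : innerB B (solidCauchy ω (eFun j k s)) (solidCauchy ω (eFun m n r)) = 0 := by
      rw [innerB, setIntegral_congr_fun hOm hpt, integral_zero]
    have hδ : ¬ ((k : ℤ) - (j : ℤ) = (n : ℤ) - (m : ℤ)) := by omega
    rw [h0, if_neg hδ]
    ring
  -- main case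
  set p : ℕ := k - j with hp
  set q : ℕ := n - m with hq
  set γ₁ : ℝ := moment ω k s with hγ₁
  set γ₂ : ℝ := moment ω n r with hγ₂
  set gB : ℝ → ℂ := fun t => ((B t : ℝ) : ℂ) with hgB
  have houter : outerDisc = {z : ℂ | ‖z‖ ∈ Set.Ioi 1} := rfl
  have hpt : ∀ z ∈ outerDisc, solidCauchy ω (eFun j k s) z *
      (starRingEnd ℂ) (solidCauchy ω (eFun m n r) z) * ((B (‖z‖ ^ 2) : ℝ) : ℂ)
      = (γ₁ : ℂ) * (γ₂ : ℂ) * (z ^ (-((p + 1 : ℕ) : ℤ)) *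
        (starRingEnd ℂ) z ^ (-((q + 1 : ℕ) : ℤ)) * gB (‖z‖ ^ 2)) := by
    intro z hz
    rw [solidCauchy_value hω_meas hω_nonneg hω_mom j k s z hz, if_pos hjk,
      solidCauchy_value hω_meas hω_nonneg hω_mom m n r z hz, if_pos hmn]
    simp only [map_mul, map_inv₀, map_pow, Complex.conj_ofReal, hgB, zpow_neg, zpow_natCast,
      ← hp, ← hq]
    ring
  have hstep1 : innerB B (solidCauchy ω (eFun j k s)) (solidCauchy ω (eFun m n r))
      = ((γ₁ : ℂ) * (γ₂ : ℂ)) * ∫ z in {z : ℂ | ‖z‖ ∈ Set.Ioi 1},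
          z ^ (-((p + 1 : ℕ) : ℤ)) * (starRingEnd ℂ) z ^ (-((q + 1 : ℕ) : ℤ)) *
            gB (‖z‖ ^ 2) := by
    rw [innerB, setIntegral_congr_fun hOm hpt, integral_const_mul, houter]
  rw [hstep1, polar_set_integral _ _ gB (Set.Ioi 1) measurableSet_Ioi (fun x hx =>
    Set.mem_Ioi.2 (lt_trans one_pos hx))]
  have hangle : ∀ a b : ℤ, (∫ θ in Set.Ioo (-π) π,
      Complex.exp (((a : ℂ) - (b : ℂ)) * θ * Complex.I))
      = if a - b = 0 then (2 * π : ℂ) else 0 := by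
    intro a b
    rw [← angular (a - b)]
    congr 1; ext θ; congr 2; push_cast; ring
  rw [hangle]
  by_cases hpq : -((p + 1 : ℕ) : ℤ) - -((q + 1 : ℕ) : ℤ) = 0
  · rw [if_pos hpq]
    have hδ : ((k : ℤ) - (j : ℤ) = (n : ℤ) - (m : ℤ)) := by omega
    rw [if_pos hδ, if_pos hjk]
    have hae : -((p + 1 : ℕ) : ℤ) + -((q + 1 : ℕ) : ℤ) = -((2 * p + 2 : ℕ) : ℤ) := by omega
    rw [hae]
    have hrad : ∀ x ∈ Set.Ioi (1:ℝ), (x : ℂ) ^ (-((2 * p + 2 : ℕ) : ℤ)) * (x : ℂ) *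
        gB (x ^ 2) = ((x ^ (-((2 * p + 2 : ℕ) : ℤ)) * x * B (x ^ 2) : ℝ) : ℂ) := by
      intro x _
      rw [Complex.ofReal_mul, Complex.ofReal_mul, Complex.ofReal_zpow]
    rw [setIntegral_congr_fun measurableSet_Ioi hrad]
    have hior : (∫ x in Set.Ioi (1:ℝ),
        ((x ^ (-((2 * p + 2 : ℕ) : ℤ)) * x * B (x ^ 2) : ℝ) : ℂ))
        = ((∫ x in Set.Ioi (1:ℝ), x ^ (-((2 * p + 2 : ℕ) : ℤ)) * x * B (x ^ 2) : ℝ) : ℂ) :=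
      integral_ofReal
    rw [hior]
    have hsubR : (∫ u in Set.Ioo (0 : ℝ) 1, u ^ ((k : ℤ) - (j : ℤ) - 1) * B (1 / u))
        = 2 * ∫ x in Set.Ioi (1:ℝ), x ^ (-((2 * p + 2 : ℕ) : ℤ)) * x * B (x ^ 2) := by
      rw [subst_inv_sq (fun u => u ^ ((k : ℤ) - (j : ℤ) - 1) * B (1 / u)),
        ← integral_const_mul]
      apply setIntegral_congr_fun measurableSet_Ioi
      intro x hx
      have hx1 : (1:ℝ) < x := hx
      have hxne : x ≠ 0 := by linarith
      have hx2ne : (x:ℝ) ^ 2 ≠ 0 := pow_ne_zero 2 hxne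
      show 2 / x ^ 3 * (((x ^ 2)⁻¹) ^ ((k : ℤ) - (j : ℤ) - 1) * B (1 / (x ^ 2)⁻¹))
          = 2 * (x ^ (-((2 * p + 2 : ℕ) : ℤ)) * x * B (x ^ 2))
      rw [one_div, inv_inv]
      have he1 : ((x ^ 2)⁻¹ : ℝ) ^ ((k : ℤ) - (j : ℤ) - 1)
          = (x ^ (2 * p) : ℝ)⁻¹ * x ^ 2 := by
        rw [show (k : ℤ) - (j : ℤ) - 1 = (p : ℤ) - 1 by omega]
        calc ((x ^ 2)⁻¹ : ℝ) ^ ((p : ℤ) - 1)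
            = ((x ^ 2)⁻¹ : ℝ) ^ (p : ℤ) * ((x ^ 2)⁻¹ : ℝ)⁻¹ :=
              zpow_sub_one₀ (inv_ne_zero hx2ne) _
          _ = ((x ^ 2) ^ p : ℝ)⁻¹ * x ^ 2 := by rw [zpow_natCast, inv_pow, inv_inv]
          _ = (x ^ (2 * p) : ℝ)⁻¹ * x ^ 2 := by rw [← pow_mul, mul_comm 2 p, mul_comm p 2]
      have he2 : (x : ℝ) ^ (-((2 * p + 2 : ℕ) : ℤ)) = ((x ^ (2 * p + 2) : ℝ))⁻¹ := by
        rw [zpow_neg, zpow_natCast]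
      rw [he1, he2]
      have hxp : (0:ℝ) < x := by linarith
      field_simp
      ring
    rw [hsubR]
    push_cast
    ring
  · rw [if_neg hpq]
    have hδ : ¬ ((k : ℤ) - (j : ℤ) = (n : ℤ) - (m : ℤ)) := by omega
    rw [if_neg hδ]
    ring
end

section
/- Let ω be a weight function on (0,1) with all moments ∫_0^1 t^n ω(t) dt finite, and B a weight function on (1,∞) with W_B = ∫_0^1 B(1/t²)/(t(1−t)²) dt < ∞. Fix a nonnegative integer k. Then the family (C_s^ω(e^s_{j,k}))_{j,s}, indexed by nonnegative integers j and s, is orthogonal in L^{2,B}(D̄^c): if j ≠ m then ⟨C_s^ω(e^s_{j,k}), C_s^ω(e^r_{m,k})⟩_B = 0 for all nonnegative integers s, r. -/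
open MeasureTheory Complex

lemma rot_setIntegral (a : Circle) (S : Set ℂ) (hS : (fun z : ℂ => (a : ℂ) * z) '' S = S)
    (f : ℂ → ℂ) : (∫ z in S, f ((a : ℂ) * z)) = ∫ z in S, f z := by
  have hmp : MeasurePreserving (fun z : ℂ => (a : ℂ) * z) volume volume := by
    have h := (rotation a).measurePreserving
    convert h using 1
    · rfl
    · rfl
    · ext z
      simp
  have hne : (a : ℂ) ≠ 0 := Circle.coe_ne_zero a
  have hemb : MeasurableEmbedding (fun z : ℂ => (a : ℂ) * z) :=
    (Homeomorph.mulLeft₀ (a : ℂ) hne).measurableEmbedding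
  have := hmp.setIntegral_image_emb hemb f S
  rw [hS] at this
  exact this.symm

lemma rot_image (a : Circle) (P : ℝ → Prop) :
    (fun z : ℂ => (a : ℂ) * z) '' {z : ℂ | P (‖z‖)} = {z : ℂ | P (‖z‖)} := by
  ext z
  constructor
  · rintro ⟨w, hw, rfl⟩
    simpa [Circle.norm_coe] using hw
  · intro hz
    refine ⟨(a : ℂ)⁻¹ * z, by simpa [Circle.norm_coe] using hz, ?_⟩
    field_simp

lemma conj_circle (a : Circle) : (starRingEnd ℂ) (a : ℂ) = (a : ℂ)⁻¹ := by
  have h : (a : ℂ) * (starRingEnd ℂ) (a : ℂ) = 1 := by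
    rw [Complex.mul_conj]
    norm_cast
    rw [Complex.normSq_eq_norm_sq, Circle.norm_coe]
    norm_num
  exact eq_inv_of_mul_eq_one_right (by rw [mul_comm] at h ⊢; linear_combination h)

lemma solidCauchy_rot (ω : ℝ → ℝ) (a : Circle) (j k l : ℕ) (z : ℂ) :
    solidCauchy ω (eFun j k l) ((a : ℂ) * z)
      = (a : ℂ) ^ ((j : ℤ) - k - 1) * solidCauchy ω (eFun j k l) z := by
  have hne : (a : ℂ) ≠ 0 := Circle.coe_ne_zero a
  have himg : (fun w : ℂ => (a : ℂ) * w) '' unitDisc = unitDisc :=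
    rot_image a (fun t => t < 1)
  unfold solidCauchy
  rw [← rot_setIntegral a unitDisc himg
    (fun ξ => eFun j k l ξ * (ω (‖ξ‖ ^ 2) : ℂ) / ((a : ℂ) * z - ξ))]
  have key : ∀ ξ : ℂ, eFun j k l ((a : ℂ) * ξ) * (ω (‖(a : ℂ) * ξ‖ ^ 2) : ℂ) /
        ((a : ℂ) * z - (a : ℂ) * ξ)
      = (a : ℂ) ^ ((j : ℤ) - k - 1) *
        (eFun j k l ξ * (ω (‖ξ‖ ^ 2) : ℂ) / (z - ξ)) := by
    intro ξ
    have habs : ‖(a : ℂ) * ξ‖ = ‖ξ‖ := by simp [Circle.norm_coe]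
    have he : eFun j k l ((a : ℂ) * ξ) = (a : ℂ) ^ j * ((a : ℂ)⁻¹) ^ k * eFun j k l ξ := by
      unfold eFun
      rw [habs, map_mul, conj_circle]
      ring
    have hpow : (a : ℂ) ^ ((j : ℤ) - k - 1) = (a : ℂ) ^ j * ((a : ℂ)⁻¹) ^ k * (a : ℂ)⁻¹ := by
      rw [sub_sub, zpow_sub₀ hne, zpow_natCast, zpow_add₀ hne, zpow_natCast, zpow_one]
      field_simp
      rw [one_div, ← mul_pow, mul_inv_cancel₀ hne, one_pow]
    rw [he, habs, hpow, ← mul_sub, div_mul_eq_div_div_swap]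
    field_simp
  simp_rw [key]
  rw [integral_const_mul]
  ring

theorem solidCauchy_eFun_orthogonal
    (ω : ℝ → ℝ) (hω_meas : Measurable ω)
    (hω_nonneg : ∀ t ∈ Set.Ioo (0 : ℝ) 1, 0 ≤ ω t)
    (hω_mom : ∀ n : ℕ, IntegrableOn (fun t => t ^ n * ω t) (Set.Ioo (0 : ℝ) 1))
    (B : ℝ → ℝ) (hB_meas : Measurable B)
    (hB_nonneg : ∀ t ∈ Set.Ioi (1 : ℝ), 0 ≤ B t)
    (hW : IntegrableOn (fun t => B (1 / t ^ 2) / (t * (1 - t) ^ 2)) (Set.Ioo (0 : ℝ) 1))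
    (k : ℕ) (j m s r : ℕ) (hjm : j ≠ m) :
    innerB B (solidCauchy ω (eFun j k s)) (solidCauchy ω (eFun m k r)) = 0 := by
  set a : Circle := Circle.exp (Real.pi / ((j : ℝ) - m)) with ha
  have hne : (a : ℂ) ≠ 0 := Circle.coe_ne_zero a
  have hjm' : (j : ℝ) - m ≠ 0 := by
    simp only [sub_ne_zero]
    exact_mod_cast hjm
  have himg : (fun w : ℂ => (a : ℂ) * w) '' outerDisc = outerDisc :=
    rot_image a (fun t => 1 < t)
  set F := solidCauchy ω (eFun j k s) with hF
  set G := solidCauchy ω (eFun m k r) with hG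
  set c : ℂ := (a : ℂ) ^ ((j : ℤ) - m) with hc
  have hcm1 : c = -1 := by
    rw [hc, ha]
    have : ((a : Circle) : ℂ) = Complex.exp ((Real.pi / ((j : ℝ) - m) : ℝ) * Complex.I) :=
      Circle.coe_exp _
    rw [this, ← Complex.exp_int_mul]
    have hjmC : ((j : ℂ)) - m ≠ 0 := by
      rw [sub_ne_zero]
      exact_mod_cast hjm
    have harg : (Int.cast ((j : ℤ) - m) : ℂ) * ((Real.pi / ((j : ℝ) - m) : ℝ) * Complex.I)
        = (Real.pi : ℂ) * Complex.I := by
      push_cast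
      field_simp
    rw [harg, Complex.exp_pi_mul_I]
  have key : innerB B F G = c * innerB B F G := by
    conv_lhs => rw [innerB,
      ← rot_setIntegral a outerDisc himg
        (fun z => F z * (starRingEnd ℂ) (G z) * (B (‖z‖ ^ 2) : ℂ))]
    have point : ∀ z : ℂ,
        F ((a : ℂ) * z) * (starRingEnd ℂ) (G ((a : ℂ) * z)) *
            (B (‖(a : ℂ) * z‖ ^ 2) : ℂ)
          = c * (F z * (starRingEnd ℂ) (G z) * (B (‖z‖ ^ 2) : ℂ)) := by
      intro z
      have habs : ‖(a : ℂ) * z‖ = ‖z‖ := by simp [Circle.norm_coe]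
      rw [habs, hF, hG, solidCauchy_rot, solidCauchy_rot, map_mul, map_zpow₀, conj_circle]
      have hcoef : (a : ℂ) ^ ((j : ℤ) - k - 1) * ((a : ℂ)⁻¹) ^ ((m : ℤ) - k - 1) = c := by
        rw [inv_zpow, ← zpow_neg, ← zpow_add₀ hne, hc]
        congr 1
        ring
      calc (a : ℂ) ^ ((j : ℤ) - k - 1) * solidCauchy ω (eFun j k s) z *
            (((a : ℂ)⁻¹) ^ ((m : ℤ) - k - 1) *
              (starRingEnd ℂ) (solidCauchy ω (eFun m k r) z)) * (B (‖z‖ ^ 2) : ℂ)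
          = ((a : ℂ) ^ ((j : ℤ) - k - 1) * ((a : ℂ)⁻¹) ^ ((m : ℤ) - k - 1)) *
            (solidCauchy ω (eFun j k s) z * (starRingEnd ℂ) (solidCauchy ω (eFun m k r) z) *
              (B (‖z‖ ^ 2) : ℂ)) := by ring
        _ = _ := by rw [hcoef]
    simp_rw [point]
    rw [integral_const_mul]
    rfl
  rw [hcm1] at key
  have h2 : (2 : ℂ) * innerB B F G = 0 := by linear_combination key
  have := mul_eq_zero.mp h2
  simpa using this
end

section
/- Let γ > −1 and α > −1 be real. For all nonnegative integers m, n with m > n, the solid weighted Cauchy transform of the disc polynomial R^γ_{m,n} vanishes identically: C_s^{ω_α}(R^γ_{m,n})(z) = 0 for every z ∈ ℂ with |z| > 1. -/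
open MeasureTheory Complex

/-- The Pochhammer symbol `(a)_k = a(a+1)⋯(a+k-1)`. -/
noncomputable def poch (a : ℝ) (k : ℕ) : ℝ := (ascPochhammer ℝ k).eval a

/-- The weight function `ω_α(t) = (1-t)^α`. -/
noncomputable def omegaW (α : ℝ) (t : ℝ) : ℝ := (1 - t) ^ α

/-- The disc polynomials `R^γ_{m,n}`. -/
noncomputable def discR (γ : ℝ) (m n : ℕ) (z : ℂ) : ℂ :=
  (m.factorial : ℂ) * (n.factorial : ℂ) *
    ∑ j ∈ Finset.range (min m n + 1),
      ((-1 : ℂ) ^ j * (((1 - ‖z‖ ^ 2) ^ j : ℝ) : ℂ) * z ^ (m - j) *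
          (starRingEnd ℂ) z ^ (n - j)) /
        ((j.factorial : ℂ) * (poch (γ + 1) j : ℂ) * ((m - j).factorial : ℂ) *
          ((n - j).factorial : ℂ))

section Auxiliary

open Set

@[fun_prop] private lemma continuous_cabs : Continuous (fun z : ℂ => ‖z‖) := continuous_norm
@[fun_prop] private lemma measurable_cabs : Measurable (fun z : ℂ => ‖z‖) :=
  continuous_norm.measurable
@[fun_prop] private lemma measurable_cor : Measurable Complex.ofReal :=
  Complex.continuous_ofReal.measurable
@[fun_prop] private lemma continuous_cor : Continuous Complex.ofReal := Complex.continuous_ofReal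
@[fun_prop] private lemma continuous_conj' : Continuous (starRingEnd ℂ) := continuous_conj
@[fun_prop] private lemma measurable_conj' : Measurable (starRingEnd ℂ) :=
  continuous_conj.measurable

private lemma meas_unitDisc : MeasurableSet unitDisc :=
  (isOpen_lt continuous_norm continuous_const).measurableSet

private lemma angular_int (k : ℤ) (hk : k ≠ 0) :
    ∫ θ : ℝ in Ioo (-Real.pi) Real.pi, Complex.exp ((k : ℂ) * θ * Complex.I) = 0 := by
  have hc : (k : ℂ) * Complex.I ≠ 0 := by
    simp [Complex.I_ne_zero, hk, Complex.ext_iff]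
  have h1 : ∀ θ : ℝ, (k : ℂ) * θ * Complex.I = ((k : ℂ) * Complex.I) * θ := fun θ => by ring
  simp_rw [h1]
  rw [← MeasureTheory.integral_Ioc_eq_integral_Ioo, ← intervalIntegral.integral_of_le
    (by linarith [Real.pi_pos] : -Real.pi ≤ Real.pi)]
  rw [integral_exp_mul_complex hc]
  rw [div_eq_zero_iff]
  left
  rw [sub_eq_zero]
  have h2 : ((k : ℂ) * Complex.I) * (Real.pi : ℂ) =
      ((k : ℂ) * Complex.I) * ((-Real.pi : ℝ) : ℂ) + (k : ℂ) * (2 * Real.pi * Complex.I) := by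
    push_cast; ring
  rw [h2, Complex.exp_add, Complex.exp_int_mul_two_pi_mul_I, mul_one]

private lemma radial_vanish (a b : ℕ) (hab : b < a) (G : ℝ → ℂ) :
    ∫ ξ in unitDisc, ξ ^ a * (starRingEnd ℂ) ξ ^ b * G ‖ξ‖ = 0 := by
  have habz : ((a : ℤ) - b) ≠ 0 := by omega
  rw [← MeasureTheory.integral_indicator meas_unitDisc,
    ← Complex.integral_comp_polarCoord_symm, polarCoord_target]
  have key : ∀ p ∈ Ioi (0:ℝ) ×ˢ Ioo (-Real.pi) Real.pi,
      p.1 • (unitDisc.indicator (fun ξ => ξ ^ a * (starRingEnd ℂ) ξ ^ b * G ‖ξ‖)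
        (Complex.polarCoord.symm p))
      = (Ioo (0:ℝ) 1).indicator (fun r => (r:ℂ) ^ (a + b + 1) * G r) p.1
          * Complex.exp ((((a : ℤ) - (b : ℤ) : ℤ) : ℂ) * p.2 * Complex.I) := by
    rintro ⟨r, θ⟩ ⟨hr, hθ⟩
    simp only [mem_Ioi] at hr
    have habs : ‖Complex.polarCoord.symm (r, θ)‖ = r := by
      rw [Complex.norm_polarCoord_symm]; exact abs_of_pos hr
    have hsymm : Complex.polarCoord.symm (r, θ) = (r:ℂ) * Complex.exp (θ * Complex.I) := by
      rw [Complex.polarCoord_symm_apply, Complex.exp_mul_I]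
      push_cast
      ring
    by_cases h1 : r < 1
    · rw [indicator_of_mem (by simp only [unitDisc, mem_setOf_eq, habs]; exact h1),
        indicator_of_mem (by exact ⟨hr, h1⟩)]
      rw [habs, hsymm]
      have hconj : (starRingEnd ℂ) ((r:ℂ) * Complex.exp (↑θ * Complex.I))
          = (r:ℂ) * Complex.exp (-(↑θ * Complex.I)) := by
        rw [map_mul, Complex.conj_ofReal, ← Complex.exp_conj]
        congr 1
        simp [map_mul, Complex.conj_I, Complex.conj_ofReal]
      rw [hconj, mul_pow, mul_pow, ← Complex.exp_nat_mul, ← Complex.exp_nat_mul,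
        Complex.real_smul]
      have hexp : Complex.exp ((a:ℂ) * (↑θ * Complex.I)) *
          Complex.exp ((b:ℂ) * -(↑θ * Complex.I))
          = Complex.exp ((((a : ℤ) - (b : ℤ) : ℤ) : ℂ) * ↑θ * Complex.I) := by
        rw [← Complex.exp_add]
        congr 1
        push_cast
        ring
      push_cast at hexp ⊢
      linear_combination ((r:ℂ)) ^ (a + b + 1) * G r * hexp
    · rw [indicator_of_notMem (by simp only [unitDisc, mem_setOf_eq, habs]; exact h1),
        indicator_of_notMem (by simp [mem_Ioo, h1]), smul_zero, zero_mul]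
  rw [setIntegral_congr_fun (measurableSet_Ioi.prod measurableSet_Ioo) key,
    MeasureTheory.Measure.volume_eq_prod, ← Measure.prod_restrict,
    MeasureTheory.integral_prod_mul
      (fun r => (Ioo (0:ℝ) 1).indicator (fun r => (r:ℂ) ^ (a+b+1) * G r) r)
      (fun θ : ℝ => Complex.exp ((((a:ℤ)-(b:ℤ) : ℤ):ℂ) * θ * Complex.I)),
    angular_int _ habz, mul_zero]

private lemma oneD_int {α : ℝ} (hα : -1 < α) :
    IntegrableOn (fun r : ℝ => (1 - r ^ 2) ^ α * r) (Ioo (0:ℝ) 1) := by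
  have h1 : IntervalIntegrable (fun x : ℝ => x ^ α) volume 0 1 :=
    intervalIntegral.intervalIntegrable_rpow' hα
  have h2 : IntervalIntegrable (fun x : ℝ => (1 - x) ^ α) volume 0 1 := by
    have := (h1.comp_sub_left 1).symm
    simpa using this
  have h3 : IntegrableOn (fun x : ℝ => (1 - x) ^ α) (Ioo (0:ℝ) 1) := by
    rw [← intervalIntegrable_iff_integrableOn_Ioo_of_le (by norm_num : (0:ℝ) ≤ 1)]
    exact h2
  set C : ℝ := max ((2:ℝ) ^ α) 1 with hC
  apply Integrable.mono' (h3.const_mul C)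
  · apply Measurable.aestronglyMeasurable
    fun_prop
  · filter_upwards [ae_restrict_mem measurableSet_Ioo] with r hr
    obtain ⟨hr0, hr1⟩ := hr
    have e1 : (1 - r ^ 2) = (1 - r) * (1 + r) := by ring
    have h1r : (0:ℝ) ≤ 1 - r := by linarith
    have h1r' : (0:ℝ) ≤ 1 + r := by linarith
    rw [Real.norm_eq_abs,
      _root_.abs_of_nonneg (mul_nonneg (Real.rpow_nonneg (by nlinarith) α) hr0.le), e1,
      Real.mul_rpow h1r h1r']
    have hle : (1 + r) ^ α ≤ C := by
      rcases le_or_gt 0 α with h | h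
      · exact le_trans (Real.rpow_le_rpow h1r' (by linarith) h) (le_max_left _ _)
      · refine le_trans ?_ (le_max_right _ _)
        calc (1 + r) ^ α ≤ 1 ^ α := Real.rpow_le_rpow_of_nonpos (by linarith) (by linarith) h.le
        _ = 1 := Real.one_rpow α
    calc (1 - r) ^ α * (1 + r) ^ α * r ≤ (1 - r) ^ α * C * 1 := by
          apply mul_le_mul (mul_le_mul_of_nonneg_left hle (Real.rpow_nonneg h1r α)) hr1.le hr0.le
          positivity
      _ = C * (1 - r) ^ α := by ring

private lemma weight_int {α : ℝ} (hα : -1 < α) :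
    IntegrableOn (fun ξ : ℂ => (1 - ‖ξ‖ ^ 2) ^ α) unitDisc := by
  set F : ℝ → ℝ := Set.indicator (Iio 1) (fun r => (1 - r ^ 2) ^ α) with hF
  rw [← integrable_indicator_iff meas_unitDisc]
  have heq : unitDisc.indicator (fun ξ => (1 - ‖ξ‖ ^ 2) ^ α)
      = fun ξ : ℂ => F ‖ξ‖ := by
    funext ξ
    simp [hF, Set.indicator, unitDisc]
    congr
  rw [heq]
  rw [← MeasureTheory.restrict_compl_singleton (μ := (volume : Measure ℂ)) 0,
    ← map_comap_subtype_coe (measurableSet_singleton (0:ℂ)).compl,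
    (MeasurableEmbedding.subtype_coe (measurableSet_singleton (0:ℂ)).compl).integrable_map_iff]
  have hcomp : ((fun ξ : ℂ => F ‖ξ‖) ∘ (Subtype.val : ({(0:ℂ)}ᶜ : Set ℂ) → ℂ))
      = (fun p : Metric.sphere (0:ℂ) 1 × Ioi (0:ℝ) => F p.2) ∘ (homeomorphUnitSphereProd ℂ) := by
    funext x
    simp [Function.comp]
  rw [hcomp, (Measure.measurePreserving_homeomorphUnitSphereProd
      (volume : Measure ℂ)).integrable_comp_emb (Homeomorph.measurableEmbedding _)]
  have hprod : Integrable (fun y : Ioi (0:ℝ) => F y.1)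
      (Measure.volumeIoiPow (Module.finrank ℝ ℂ - 1)) := by
    rw [Measure.volumeIoiPow]
    rw [integrable_withDensity_iff (by fun_prop)
      (Filter.Eventually.of_forall fun _ => ENNReal.ofReal_lt_top)]
    have h5 : (fun y : Ioi (0:ℝ) => F y.1 * (ENNReal.ofReal
        (y.1 ^ (Module.finrank ℝ ℂ - 1))).toReal)
        = (fun r : ℝ => F r * r) ∘ (Subtype.val : Ioi (0:ℝ) → ℝ) := by
      funext y
      have hy : (0:ℝ) < y.1 := y.2
      simp [Complex.finrank_real_complex, Function.comp,
        ENNReal.toReal_ofReal (le_of_lt hy)]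
    rw [h5, ← (MeasurableEmbedding.subtype_coe measurableSet_Ioi).integrable_map_iff,
      map_comap_subtype_coe measurableSet_Ioi]
    have h6 : (fun r : ℝ => F r * r) = Set.indicator (Iio 1) (fun r => (1 - r^2)^α * r) := by
      funext r
      rw [hF, Set.indicator_mul_left]
    show Integrable _ (volume.restrict (Ioi 0))
    rw [h6, integrable_indicator_iff measurableSet_Iio]
    show Integrable _ ((volume.restrict (Ioi 0)).restrict (Iio 1))
    rw [Measure.restrict_restrict measurableSet_Iio, Set.Iio_inter_Ioi]
    exact oneD_int hα
  have hone := (integrable_const (1:ℝ) (μ := (volume : Measure ℂ).toSphere)).mul_prod hprod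
  simpa using hone

private lemma continuous_discR (γ : ℝ) (m n : ℕ) : Continuous (discR γ m n) := by
  unfold discR; fun_prop

private lemma discR_bound (γ : ℝ) (m n : ℕ) :
    ∃ M : ℝ, 0 ≤ M ∧ ∀ ξ ∈ unitDisc, ‖discR γ m n ξ‖ ≤ M := by
  obtain ⟨M, hM⟩ := (isCompact_closedBall (0:ℂ) 1).exists_bound_of_continuousOn
    (continuous_discR γ m n).continuousOn
  refine ⟨M, le_trans (norm_nonneg _) (hM 0 (by simp)), fun ξ hξ => hM ξ ?_⟩
  simp only [Metric.mem_closedBall, dist_zero_right]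
  exact le_of_lt hξ

end Auxiliary

theorem solidCauchy_discR_of_gt (γ α : ℝ) (hγ : -1 < γ) (hα : -1 < α)
    (m n : ℕ) (hmn : n < m) (z : ℂ) (hz : 1 < ‖z‖) :
    solidCauchy (omegaW α) (discR γ m n) z = 0 := by
  have hzpos : (0:ℝ) < ‖z‖ := lt_trans one_pos hz
  have hz0 : z ≠ 0 := by
    intro h
    rw [h] at hz
    simp at hz
    linarith
  set w : ℂ → ℝ := fun ξ => (1 - ‖ξ‖ ^ 2) ^ α with hw
  have hw_int : IntegrableOn w unitDisc := weight_int hα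
  have hwnn : ∀ ξ ∈ unitDisc, 0 ≤ w ξ := by
    intro ξ hξ
    have : ‖ξ‖ < 1 := hξ
    exact Real.rpow_nonneg (by nlinarith [norm_nonneg ξ]) α
  obtain ⟨M, hM0, hM⟩ := discR_bound γ m n
  set r : ℝ := ‖z‖⁻¹ with hr
  have hr0 : 0 ≤ r := by positivity
  have hr1 : r < 1 := by
    rw [hr]
    exact inv_lt_one_of_one_lt₀ hz
  set F : ℕ → ℂ → ℂ := fun k ξ => discR γ m n ξ * (w ξ : ℂ) * ξ ^ k * (z ^ (k+1))⁻¹ with hF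
  have hFmeas : ∀ k, AEStronglyMeasurable (F k) (volume.restrict unitDisc) := by
    intro k
    apply Measurable.aestronglyMeasurable
    simp only [hF, hw]
    have := (continuous_discR γ m n).measurable
    fun_prop
  have hbound : ∀ k, ∀ ξ ∈ unitDisc, ‖F k ξ‖ ≤ (M * r ^ k) * w ξ := by
    intro k ξ hξ
    have hξ1 : ‖ξ‖ < 1 := hξ
    have hnn := hwnn ξ hξ
    have e1 : ‖F k ξ‖ = ‖discR γ m n ξ‖ * w ξ * ‖ξ‖ ^ k
        * (‖z‖ ^ (k+1))⁻¹ := by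
      simp only [hF, norm_mul, norm_pow, norm_inv, Complex.norm_real, Real.norm_eq_abs,
        _root_.abs_of_nonneg hnn]
    rw [e1]
    have h2 : (‖z‖ ^ (k+1))⁻¹ ≤ r ^ k := by
      rw [← inv_pow]
      exact pow_le_pow_of_le_one (by positivity) (inv_le_one_of_one_le₀ hz.le) (Nat.le_succ k)
    calc ‖discR γ m n ξ‖ * w ξ * ‖ξ‖ ^ k * (‖z‖ ^ (k+1))⁻¹
        ≤ M * w ξ * 1 ^ k * r ^ k := by
          gcongr <;> first
            | exact hM ξ hξ
            | exact hξ1.le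
      _ = (M * r ^ k) * w ξ := by rw [one_pow]; ring
  have hFint : ∀ k : ℕ, Integrable (F k) (volume.restrict unitDisc) := by
    intro k
    apply Integrable.mono' (hw_int.const_mul (M * r ^ k)) (hFmeas k)
    filter_upwards [ae_restrict_mem meas_unitDisc] with ξ hξ
    exact hbound k ξ hξ
  set W : ℝ := ∫ ξ in unitDisc, w ξ with hWdef
  have hsum : Summable fun k : ℕ => ∫ ξ in unitDisc, ‖F k ξ‖ := by
    apply Summable.of_nonneg_of_le
      (fun k => integral_nonneg fun ξ => norm_nonneg _)
      (fun k => ?_)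
      (Summable.mul_left (M * W) (summable_geometric_of_lt_one hr0 hr1))
    calc (∫ ξ in unitDisc, ‖F k ξ‖) ≤ ∫ ξ in unitDisc, (M * r ^ k) * w ξ := by
          apply integral_mono_ae (hFint k).norm (hw_int.const_mul _)
          filter_upwards [ae_restrict_mem meas_unitDisc] with ξ hξ
          exact hbound k ξ hξ
      _ = (M * r ^ k) * W := by rw [integral_const_mul]
      _ = M * W * r ^ k := by ring
  have hterm0 : ∀ k : ℕ, (∫ ξ in unitDisc, F k ξ) = 0 := by
    intro k
    have hmin : min m n = n := min_eq_right hmn.le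
    set G : ℕ → ℝ → ℂ := fun j s => (((1 - s ^ 2) ^ j : ℝ) : ℂ) * (((1 - s ^ 2) ^ α : ℝ) : ℂ)
      with hG
    set c : ℕ → ℂ := fun j => ((m.factorial : ℂ) * (n.factorial : ℂ) * (-1)^j /
      ((j.factorial : ℂ) * (poch (γ+1) j : ℂ) * ((m-j).factorial : ℂ) *
        ((n-j).factorial : ℂ))) * (z ^ (k+1))⁻¹ with hc
    have hexp : ∀ ξ : ℂ, F k ξ = ∑ j ∈ Finset.range (n+1),
        c j * (ξ ^ (m - j + k) * (starRingEnd ℂ) ξ ^ (n - j) * G j ‖ξ‖) := by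
      intro ξ
      simp only [hF, hw, hG, hc, discR, hmin, Finset.mul_sum, Finset.sum_mul]
      refine Finset.sum_congr rfl fun j hj => ?_
      rw [pow_add]
      ring
    have hGbd : ∀ j, ∀ ξ ∈ unitDisc, ‖G j ‖ξ‖‖ ≤ w ξ := by
      intro j ξ hξ
      have hξ1 : ‖ξ‖ < 1 := hξ
      have h01 : (0:ℝ) ≤ 1 - ‖ξ‖ ^ 2 := by nlinarith [norm_nonneg ξ]
      have h11 : (1 - ‖ξ‖ ^ 2) ≤ 1 := by nlinarith [norm_nonneg ξ]
      have := hwnn ξ hξ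
      simp only [hG, norm_mul, Complex.norm_real, Real.norm_eq_abs]
      rw [_root_.abs_of_nonneg (pow_nonneg h01 j), _root_.abs_of_nonneg (Real.rpow_nonneg h01 α)]
      calc (1 - ‖ξ‖ ^ 2) ^ j * (1 - ‖ξ‖ ^ 2) ^ α
          ≤ 1 * (1 - ‖ξ‖ ^ 2) ^ α := by
            apply mul_le_mul_of_nonneg_right (pow_le_one₀ h01 h11) (Real.rpow_nonneg h01 α)
        _ = w ξ := by rw [one_mul]
    have hHint : ∀ j ∈ Finset.range (n+1), Integrable
        (fun ξ => c j * (ξ ^ (m - j + k) * (starRingEnd ℂ) ξ ^ (n - j) * G j ‖ξ‖))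
        (volume.restrict unitDisc) := by
      intro j hj
      apply Integrable.mono' (hw_int.const_mul ‖c j‖)
      · apply Measurable.aestronglyMeasurable
        simp only [hG]
        fun_prop
      · filter_upwards [ae_restrict_mem meas_unitDisc] with ξ hξ
        have hξ1 : ‖ξ‖ < 1 := hξ
        have hnn := hwnn ξ hξ
        have hA : ‖ξ ^ (m - j + k) * (starRingEnd ℂ) ξ ^ (n - j) * G j ‖ξ‖‖
            ≤ w ξ := by
          rw [norm_mul, norm_mul, norm_pow, norm_pow, Complex.norm_conj]
          calc ‖ξ‖ ^ (m-j+k) * ‖ξ‖ ^ (n-j) * ‖G j ‖ξ‖‖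
              ≤ 1 * 1 * w ξ := by
                have hb1 : ‖ξ‖ ^ (m-j+k) ≤ 1 :=
                  pow_le_one₀ (norm_nonneg ξ) hξ1.le
                have hb2 : ‖ξ‖ ^ (n-j) ≤ 1 :=
                  pow_le_one₀ (norm_nonneg ξ) hξ1.le
                have hb3 := hGbd j ξ hξ
                have hp2 : (0:ℝ) ≤ ‖ξ‖ ^ (n-j) := by positivity
                have hp3 : (0:ℝ) ≤ ‖G j ‖ξ‖‖ := norm_nonneg _
                have t1 : ‖ξ‖ ^ (m-j+k) * ‖ξ‖ ^ (n-j) ≤ 1 * 1 :=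
                  mul_le_mul hb1 hb2 hp2 zero_le_one
                exact mul_le_mul t1 hb3 hp3 (by norm_num)
            _ = w ξ := by ring
        calc ‖c j * (ξ ^ (m - j + k) * (starRingEnd ℂ) ξ ^ (n - j) * G j ‖ξ‖)‖
            = ‖c j‖ * ‖ξ ^ (m - j + k) * (starRingEnd ℂ) ξ ^ (n - j) * G j ‖ξ‖‖ :=
              norm_mul _ _
          _ ≤ ‖c j‖ * w ξ := mul_le_mul_of_nonneg_left hA (norm_nonneg _)
    rw [setIntegral_congr_fun meas_unitDisc (fun ξ _ => hexp ξ),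
      integral_finset_sum _ hHint]
    apply Finset.sum_eq_zero
    intro j hj
    have hj' : j ≤ n := Nat.lt_succ_iff.mp (Finset.mem_range.mp hj)
    rw [integral_const_mul, radial_vanish (m - j + k) (n - j) (by omega) (G j), mul_zero]
  have hps : ∀ ξ ∈ unitDisc,
      discR γ m n ξ * ((omegaW α (‖ξ‖ ^ 2) : ℝ) : ℂ) / (z - ξ) = ∑' k, F k ξ := by
    intro ξ hξ
    have hξ1 : ‖ξ‖ < 1 := hξ
    have hdiv : ‖ξ / z‖ < 1 := by
      rw [norm_div, div_lt_one hzpos]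
      linarith
    have hgeo : ∑' k : ℕ, (ξ / z) ^ k = (1 - ξ / z)⁻¹ := tsum_geometric_of_norm_lt_one hdiv
    have h7 : ∀ k : ℕ, F k ξ = (discR γ m n ξ * (w ξ : ℂ) * z⁻¹) * (ξ / z) ^ k := by
      intro k
      simp only [hF]
      have h8 : (z ^ (k+1))⁻¹ = (z ^ k)⁻¹ * z⁻¹ := by rw [pow_succ, mul_inv]
      rw [h8, div_pow, div_eq_mul_inv]
      ring
    have hom : ((omegaW α (‖ξ‖ ^ 2) : ℝ) : ℂ) = ((w ξ : ℝ) : ℂ) := rfl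
    calc discR γ m n ξ * ((omegaW α (‖ξ‖ ^ 2) : ℝ) : ℂ) / (z - ξ)
        = (discR γ m n ξ * (w ξ : ℂ) * z⁻¹) * (1 - ξ/z)⁻¹ := by
          rw [hom, div_eq_mul_inv]
          have h9 : (z - ξ)⁻¹ = z⁻¹ * (1 - ξ/z)⁻¹ := by
            rw [← mul_inv]
            congr 1
            field_simp
          rw [h9]
          ring
      _ = (discR γ m n ξ * (w ξ : ℂ) * z⁻¹) * ∑' k : ℕ, (ξ/z)^k := by rw [hgeo]
      _ = ∑' k : ℕ, F k ξ := by
          rw [← tsum_mul_left]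
          exact tsum_congr fun k => (h7 k).symm
  have hinner : (∫ ξ in unitDisc,
      discR γ m n ξ * ((omegaW α (‖ξ‖ ^ 2) : ℝ) : ℂ) / (z - ξ)) = 0 := by
    rw [setIntegral_congr_fun meas_unitDisc hps,
      ← MeasureTheory.integral_tsum_of_summable_integral_norm hFint hsum]
    simp [hterm0]
  unfold solidCauchy
  rw [hinner, mul_zero]
end
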